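/- Let γ, γ² : [0,∞) → V be continuous paths of locally bounded variation, c ∈ V, and (t_n)_{n≥0} strictly increasing positive reals with t_n → ∞ such that γ²(t_n) = c for all n. Set γ¹ := γ − γ², A := A(γ), A¹¹ := A(γ¹). Then ‖A‖_{1-var,[0,∞)} ≤ ‖A‖_{1-var,[0,t_0]} + 2‖γ‖²_{2-var,[0,∞)} + 2·Σ_{n≥0} ‖A‖_{1-var,[t_n,t_{n+1}]} + 2·sup_{(n_k)} Σ_k ‖A¹¹(t_{n_k}, t_{n_{k+1}})‖, where the supremum is over strictly increasing subsequences (n_k). -/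

import Mathlib

open Filter Set ENNReal

noncomputable section

variable {V : Type*} [NormedAddCommGroup V] [NormedSpace ℝ V]
variable {W : Type*} [NormedAddCommGroup W] [NormedSpace ℝ W]

/-- The `p`-th power of the `p`-variation of a path `γ` on `[a, b]`. -/
def pVarPow (p : ℝ) (γ : ℝ → V) (a b : ℝ) : ℝ≥0∞ :=
  ⨆ (m : ℕ) (t : ℕ → ℝ) (_ : t 0 = a ∧ t m = b ∧ ∀ i < m, t i ≤ t (i + 1)),
    ENNReal.ofReal (∑ i ∈ Finset.range m, ‖γ (t (i + 1)) - γ (t i)‖ ^ p)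

/-- The `p`-th power of the `p`-variation of a path on `[0, ∞)`. -/
def pVarPowInf (p : ℝ) (γ : ℝ → V) : ℝ≥0∞ := ⨆ n : ℕ, pVarPow p γ 0 n

/-- The `1`-variation of a two-parameter function `α` (with `α(t,t) = 0`) on `[a,b]`:
the supremum over finite partitions of `∑ ‖α(t i, t (i+1))‖`. -/
def oneVarTP (α : ℝ → ℝ → W) (a b : ℝ) : ℝ≥0∞ :=
  ⨆ (m : ℕ) (t : ℕ → ℝ) (_ : t 0 = a ∧ t m = b ∧ ∀ i < m, t i ≤ t (i + 1)),
    ENNReal.ofReal (∑ i ∈ Finset.range m, ‖α (t i) (t (i + 1))‖)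

/-- The `1`-variation of a two-parameter function on `[0, ∞)`. -/
def oneVarTPInf (α : ℝ → ℝ → W) : ℝ≥0∞ := ⨆ n : ℕ, oneVarTP α 0 n



private lemma pack_exists (g : ℝ → ℝ → ℝ) (hg : ∀ x y, 0 ≤ g x y)
    {ι : Type*} [LinearOrder ι] (p q : ι → ℝ) (a : ℝ) (J : Finset ι) :
    ∀ (b : ℝ), a ≤ b → (∀ j ∈ J, a ≤ p j ∧ p j ≤ q j ∧ q j ≤ b) →
    (∀ j ∈ J, ∀ j' ∈ J, j < j' → q j ≤ p j') →
    ∃ (m : ℕ) (r : ℕ → ℝ), (r 0 = a ∧ r m = b ∧ ∀ i < m, r i ≤ r (i + 1)) ∧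
      ∑ j ∈ J, g (p j) (q j) ≤ ∑ i ∈ Finset.range m, g (r i) (r (i + 1)) := by
  classical
  induction J using Finset.induction_on_max with
  | empty =>
    intro b hab _ _
    refine ⟨1, fun k => if k = 0 then a else b, ⟨rfl, rfl, ?_⟩, ?_⟩
    · intro i hi
      interval_cases i
      simpa using hab
    · simp only [Finset.sum_empty, Finset.sum_range_one]
      exact hg _ _
  | insert j₀ J' hmax ih =>
    intro b hab hbd hchain
    have hj₀ : j₀ ∈ insert j₀ J' := Finset.mem_insert_self _ _
    have hbd₀ := hbd j₀ hj₀
    obtain ⟨m, r, ⟨hr0, hrm, hrmono⟩, hsum⟩ := ih (p j₀) hbd₀.1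
      (fun j hj => ⟨(hbd j (Finset.mem_insert_of_mem hj)).1,
        (hbd j (Finset.mem_insert_of_mem hj)).2.1,
        hchain j (Finset.mem_insert_of_mem hj) j₀ hj₀ (hmax j hj)⟩)
      (fun j hj j' hj' hlt => hchain j (Finset.mem_insert_of_mem hj) j'
        (Finset.mem_insert_of_mem hj') hlt)
    set r' : ℕ → ℝ := fun k => if k ≤ m then r k else if k = m + 1 then q j₀ else b with hr'
    have hv1 : ∀ k, k ≤ m → r' k = r k := fun k hk => by simp only [hr', if_pos hk]
    have hv2 : r' (m + 1) = q j₀ := by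
      have h1 : ¬ m + 1 ≤ m := by omega
      simp [hr', h1]
    have hv3 : r' (m + 2) = b := by
      simp only [hr', if_neg (by omega : ¬ m + 2 ≤ m), if_neg (by omega : m + 2 ≠ m + 1)]
    refine ⟨m + 2, r', ⟨by rw [hv1 0 (by omega), hr0], by rw [hv3], ?_⟩, ?_⟩
    · intro i hi
      rcases lt_trichotomy i m with h | h | h
      · rw [hv1 i h.le, hv1 (i+1) (by omega)]
        exact hrmono i h
      · subst h
        rw [hv1 i le_rfl, hv2, hrm]
        exact hbd₀.2.1
      · have h1 : i = m + 1 := by omega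
        subst h1
        rw [hv2, hv3]
        exact hbd₀.2.2
    · have hnotmem : j₀ ∉ J' := fun h => absurd (hmax j₀ h) (lt_irrefl _)
      rw [Finset.sum_insert hnotmem]
      rw [Finset.sum_range_succ, Finset.sum_range_succ]
      have e1 : ∑ i ∈ Finset.range m, g (r' i) (r' (i + 1))
          = ∑ i ∈ Finset.range m, g (r i) (r (i + 1)) := by
        refine Finset.sum_congr rfl fun i hi => ?_
        have hi' := Finset.mem_range.mp hi
        rw [hv1 i (by omega), hv1 (i+1) (by omega)]
      rw [e1, hv1 m le_rfl, hv2, hv3, hrm]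
      have := hg (q j₀) b
      linarith [hsum]

private lemma packSigma_exists (B : ℕ → ℕ → ℝ) (hB : ∀ k l, 0 ≤ B k l) :
    ∀ (N : ℕ) (a b : ℕ → ℕ), (∀ j ≤ N, a j < b j) → (∀ j < N, b j ≤ a (j + 1)) →
    ∃ (M : ℕ) (σ : ℕ → ℕ), StrictMono σ ∧ σ M = b N ∧
      ∑ j ∈ Finset.range (N + 1), B (a j) (b j) ≤ ∑ k ∈ Finset.range M, B (σ k) (σ (k + 1)) := by
  intro N
  induction N with
  | zero =>
    intro a b hab _
    refine ⟨1, fun k => if k = 0 then a 0 else b 0 + (k - 1), ?_, by simp, ?_⟩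
    · apply strictMono_nat_of_lt_succ
      intro k
      rcases Nat.eq_zero_or_pos k with h | h
      · subst h; simpa using hab 0 le_rfl
      · simp only [if_neg (by omega : k ≠ 0), if_neg (by omega : k + 1 ≠ 0)]
        omega
    · simp
  | succ N ih =>
    intro a b hab hch
    obtain ⟨M, σ, hσ, hend, hsum⟩ := ih a b (fun j hj => hab j (by omega))
      (fun j hj => hch j (by omega))
    have habN : a (N + 1) < b (N + 1) := hab (N + 1) le_rfl
    rcases eq_or_lt_of_le (hch N (by omega)) with h | h
    · -- b N = a (N+1) : extend by one
      set σ' : ℕ → ℕ := fun k => if k ≤ M then σ k else b (N + 1) + (k - (M + 1)) with hσ'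
      have hv1 : ∀ k, k ≤ M → σ' k = σ k := fun k hk => by simp only [hσ', if_pos hk]
      have hv2 : ∀ k, M < k → σ' k = b (N + 1) + (k - (M + 1)) := fun k hk => by
        simp only [hσ', if_neg (by omega : ¬ k ≤ M)]
      refine ⟨M + 1, σ', ?_, by rw [hv2 _ (by omega)]; omega, ?_⟩
      · apply strictMono_nat_of_lt_succ
        intro k
        rcases lt_trichotomy k M with hk | hk | hk
        · rw [hv1 k hk.le, hv1 (k+1) (by omega)]; exact hσ (by omega)
        · subst hk
          rw [hv1 k le_rfl, hv2 (k+1) (by omega), hend]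
          omega
        · rw [hv2 k hk, hv2 (k+1) (by omega)]
          omega
      · rw [Finset.sum_range_succ (fun j => B (a j) (b j)) (N+1),
          Finset.sum_range_succ (fun k => B (σ' k) (σ' (k+1))) M]
        have e1 : ∑ k ∈ Finset.range M, B (σ' k) (σ' (k + 1))
            = ∑ k ∈ Finset.range M, B (σ k) (σ (k + 1)) := by
          refine Finset.sum_congr rfl fun k hk => ?_
          have hk' := Finset.mem_range.mp hk
          rw [hv1 k (by omega), hv1 (k+1) (by omega)]
        rw [e1, hv1 M le_rfl, hv2 (M+1) (by omega), hend, h]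
        have : b (N + 1) + (M + 1 - (M + 1)) = b (N + 1) := by omega
        rw [this]
        exact add_le_add hsum le_rfl
    · -- b N < a (N+1) : extend by two
      set σ' : ℕ → ℕ := fun k => if k ≤ M then σ k else if k = M + 1 then a (N + 1)
        else b (N + 1) + (k - (M + 2)) with hσ'
      have hv1 : ∀ k, k ≤ M → σ' k = σ k := fun k hk => by simp only [hσ', if_pos hk]
      have hv2 : σ' (M + 1) = a (N + 1) := by
        have h1 : ¬ M + 1 ≤ M := by omega
        simp [hσ', h1]
      have hv3 : ∀ k, M + 1 < k → σ' k = b (N + 1) + (k - (M + 2)) := fun k hk => by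
        simp only [hσ', if_neg (by omega : ¬ k ≤ M), if_neg (by omega : k ≠ M + 1)]
      refine ⟨M + 2, σ', ?_, by rw [hv3 _ (by omega)]; omega, ?_⟩
      · apply strictMono_nat_of_lt_succ
        intro k
        rcases lt_trichotomy k M with hk | hk | hk
        · rw [hv1 k hk.le, hv1 (k+1) (by omega)]; exact hσ (by omega)
        · subst hk
          rw [hv1 k le_rfl, hv2, hend]
          omega
        · rcases eq_or_lt_of_le (show M + 1 ≤ k by omega) with hk2 | hk2
          · rw [← hk2, hv2, hv3 (M+2) (by omega)]
            omega
          · rw [hv3 k (by omega), hv3 (k+1) (by omega)]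
            omega
      · rw [Finset.sum_range_succ (fun j => B (a j) (b j)) (N+1),
          Finset.sum_range_succ (fun k => B (σ' k) (σ' (k+1))) (M+1),
          Finset.sum_range_succ (fun k => B (σ' k) (σ' (k+1))) M]
        have e1 : ∑ k ∈ Finset.range M, B (σ' k) (σ' (k + 1))
            = ∑ k ∈ Finset.range M, B (σ k) (σ (k + 1)) := by
          refine Finset.sum_congr rfl fun k hk => ?_
          have hk' := Finset.mem_range.mp hk
          rw [hv1 k (by omega), hv1 (k+1) (by omega)]
        rw [e1, hv1 M le_rfl, hv2, hv3 (M+2) (by omega)]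
        have : b (N + 1) + (M + 2 - (M + 2)) = b (N + 1) := by omega
        rw [this]
        have h0 := hB (σ M) (a (N + 1))
        linarith [hsum]

private lemma pack_le (g : ℝ → ℝ → ℝ) (hg : ∀ x y, 0 ≤ g x y)
    {ι : Type*} [LinearOrder ι] (p q : ι → ℝ) {a b : ℝ} (hab : a ≤ b) (J : Finset ι)
    (hbd : ∀ j ∈ J, a ≤ p j ∧ p j ≤ q j ∧ q j ≤ b)
    (hchain : ∀ j ∈ J, ∀ j' ∈ J, j < j' → q j ≤ p j') :
    ENNReal.ofReal (∑ j ∈ J, g (p j) (q j)) ≤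
      ⨆ (m : ℕ) (r : ℕ → ℝ) (_ : r 0 = a ∧ r m = b ∧ ∀ i < m, r i ≤ r (i + 1)),
        ENNReal.ofReal (∑ i ∈ Finset.range m, g (r i) (r (i + 1))) := by
  obtain ⟨m, r, hr, hsum⟩ := pack_exists g hg p q a J b hab hbd hchain
  refine le_trans (ENNReal.ofReal_le_ofReal hsum) ?_
  exact le_iSup_of_le m (le_iSup_of_le r (le_iSup_of_le hr le_rfl))

private lemma packSigma_le (B : ℕ → ℕ → ℝ) (hB : ∀ k l, 0 ≤ B k l)
    (N : ℕ) (a b : ℕ → ℕ) (h1 : ∀ j < N, a j < b j) (h2 : ∀ j, j + 1 < N → b j ≤ a (j + 1)) :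
    ENNReal.ofReal (∑ j ∈ Finset.range N, B (a j) (b j)) ≤
      ⨆ (m : ℕ) (σ : ℕ → ℕ) (_ : StrictMono σ),
        ENNReal.ofReal (∑ k ∈ Finset.range m, B (σ k) (σ (k + 1))) := by
  rcases N with _ | N'
  · simp
  · obtain ⟨M, σ, hσ, _, hsum⟩ := packSigma_exists B hB N' a b
      (fun j hj => h1 j (by omega)) (fun j hj => h2 j (by omega))
    refine le_trans (ENNReal.ofReal_le_ofReal hsum) ?_
    exact le_iSup_of_le M (le_iSup_of_le σ (le_iSup_of_le hσ le_rfl))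

set_option maxHeartbeats 2000000 in
theorem stmt8 (γ γ₂ γ₁ : ℝ → V) (hγ : Continuous γ) (hγ₂ : Continuous γ₂)
    (hBV : ∀ n : ℕ, pVarPow 1 γ 0 n < ⊤ ∧ pVarPow 1 γ₂ 0 n < ⊤)
    (hdiff : ∀ s, γ₁ s = γ s - γ₂ s)
    (t : ℕ → ℝ) (ht0 : 0 < t 0) (hmono : StrictMono t)
    (htend : Tendsto t atTop atTop)
    (c : V) (hc : ∀ n : ℕ, γ₂ (t n) = c)
    (L : V →ₗ[ℝ] V →ₗ[ℝ] W) (hL : ∀ u v : V, ‖L u v‖ ≤ ‖u‖ * ‖v‖)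
    (A A₁₁ : ℝ → ℝ → W)
    (hA : ∀ s v r : ℝ, s ≤ v → v ≤ r →
      A s r = A s v + A v r + (2⁻¹ : ℝ) •
        (L (γ v - γ s) (γ r - γ v) - L (γ r - γ v) (γ v - γ s)))
    (hA₁₁ : ∀ s v r : ℝ, s ≤ v → v ≤ r →
      A₁₁ s r = A₁₁ s v + A₁₁ v r + (2⁻¹ : ℝ) •
        (L (γ₁ v - γ₁ s) (γ₁ r - γ₁ v) - L (γ₁ r - γ₁ v) (γ₁ v - γ₁ s))) :
    oneVarTPInf A ≤
      oneVarTP A 0 (t 0) + 2 * pVarPowInf 2 γ +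
      2 * (∑' n : ℕ, oneVarTP A (t n) (t (n + 1))) +
      2 * ⨆ (m : ℕ) (σ : ℕ → ℕ) (_ : StrictMono σ),
        ENNReal.ofReal (∑ k ∈ Finset.range m, ‖A₁₁ (t (σ k)) (t (σ (k + 1)))‖) := by
  classical
  -- basic algebraic facts
  have hA0 : ∀ x : ℝ, A x x = 0 := by
    intro x
    have h := hA x x x le_rfl le_rfl
    simp only [sub_self, map_zero, LinearMap.zero_apply, smul_zero, sub_zero, add_zero] at h
    exact add_eq_right.mp h.symm
  have hA₁₁0 : ∀ x : ℝ, A₁₁ x x = 0 := by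
    intro x
    have h := hA₁₁ x x x le_rfl le_rfl
    simp only [sub_self, map_zero, LinearMap.zero_apply, smul_zero, sub_zero, add_zero] at h
    exact add_eq_right.mp h.symm
  have hbr : ∀ x y : V, ‖(2⁻¹ : ℝ) • (L x y - L y x)‖ ≤ ‖x‖ * ‖y‖ := by
    intro x y
    rw [norm_smul]
    have h1 : ‖(2⁻¹ : ℝ)‖ = 2⁻¹ := by rw [Real.norm_eq_abs]; norm_num
    rw [h1]
    have h2 : ‖L x y - L y x‖ ≤ ‖x‖ * ‖y‖ + ‖y‖ * ‖x‖ :=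
      le_trans (norm_sub_le _ _) (add_le_add (hL x y) (hL y x))
    nlinarith [norm_nonneg (L x y - L y x)]
  have hinc : ∀ k l : ℕ, γ (t k) - γ (t l) = γ₁ (t k) - γ₁ (t l) := by
    intro k l
    rw [hdiff, hdiff, hc, hc]
    abel
  have tele : ∀ k l : ℕ, k ≤ l → A (t k) (t l) = A₁₁ (t k) (t l) +
      ∑ j ∈ Finset.Ico k l, (A (t j) (t (j + 1)) - A₁₁ (t j) (t (j + 1))) := by
    intro k l hkl
    induction l, hkl using Nat.le_induction with
    | base => simp [hA0, hA₁₁0]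
    | succ l hkl ih =>
      have h1 := hA (t k) (t l) (t (l + 1)) (hmono.monotone hkl) (hmono.monotone (by omega))
      have h2 := hA₁₁ (t k) (t l) (t (l + 1)) (hmono.monotone hkl) (hmono.monotone (by omega))
      rw [Finset.sum_Ico_succ_top hkl, h1, h2, ih, hinc l k, hinc (l + 1) l]
      abel
  -- reduce to a single partition
  rw [oneVarTPInf]
  refine iSup_le fun n => ?_
  rw [oneVarTP]
  refine iSup_le fun m => iSup_le fun s => iSup_le fun hpart => ?_
  obtain ⟨hs0, hsm, hstep⟩ := hpart
  have hsmono : ∀ i j : ℕ, i ≤ j → j ≤ m → s i ≤ s j := by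
    intro i j hij hjm
    induction j, hij using Nat.le_induction with
    | base => exact le_rfl
    | succ j hij ih => exact le_trans (ih (by omega)) (hstep j (by omega))
  have hs_nonneg : ∀ i, i ≤ m → 0 ≤ s i := fun i hi => hs0 ▸ hsmono 0 i (by omega) hi
  have hs_le_n : ∀ i, i ≤ m → s i ≤ (n : ℝ) := fun i hi => hsm ▸ hsmono i m hi le_rfl
  obtain ⟨K, hK⟩ := Filter.eventually_atTop.mp (htend.eventually (eventually_gt_atTop (n : ℝ)))
  have haex : ∀ x : ℝ, ∃ k, x ≤ t k := fun x =>
    (htend.eventually (eventually_ge_atTop x)).exists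
  set a : ℕ → ℕ := fun i => Nat.find (haex (s i)) with ha_def
  set b : ℕ → ℕ := fun i => Nat.findGreatest (fun k => t k ≤ s (i + 1)) K with hb_def
  set Hi : ℕ → Prop := fun i => ∃ k, s i ≤ t k ∧ t k ≤ s (i + 1) with hHi_def
  -- basic facts about a, b
  have fa1 : ∀ i, s i ≤ t (a i) := fun i => Nat.find_spec (haex (s i))
  have fa7 : ∀ i, 1 ≤ a i → t (a i - 1) < s i := by
    intro i hi
    have := Nat.find_min (haex (s i)) (show a i - 1 < a i by omega)
    linarith [lt_of_not_ge this]
  have fwitK : ∀ i, i < m → ∀ k, t k ≤ s (i + 1) → k < K := by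
    intro i him k hk
    by_contra hkK
    push_neg at hkK
    have h1 := hK k hkK
    have h2 := hs_le_n (i + 1) (by omega)
    linarith
  have fb1 : ∀ i, i < m → Hi i → t (b i) ≤ s (i + 1) := by
    intro i him hi
    obtain ⟨k, hk1, hk2⟩ := hi
    exact Nat.findGreatest_spec (P := fun k => t k ≤ s (i + 1)) (le_of_lt (fwitK i him k hk2)) hk2
  have fab : ∀ i, i < m → Hi i → a i ≤ b i := by
    intro i him hi
    obtain ⟨k, hk1, hk2⟩ := hi
    exact le_trans (Nat.find_min' (haex (s i)) hk1)
      (Nat.le_findGreatest (P := fun k => t k ≤ s (i + 1)) (le_of_lt (fwitK i him k hk2)) hk2)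
  have fbK : ∀ i, i < m → Hi i → b i < K := fun i him hi => fwitK i him (b i) (fb1 i him hi)
  have fa5 : ∀ i, i < m → Hi i → t (a i) ≤ s (i + 1) := by
    intro i him hi
    obtain ⟨k, hk1, hk2⟩ := hi
    exact le_trans (hmono.monotone (Nat.find_min' (haex (s i)) hk1)) hk2
  have fb6 : ∀ i, i < m → Hi i → s i ≤ t (b i) := by
    intro i him hi
    obtain ⟨k, hk1, hk2⟩ := hi
    exact le_trans hk1 (hmono.monotone
      (Nat.le_findGreatest (P := fun k => t k ≤ s (i + 1)) (le_of_lt (fwitK i him k hk2)) hk2))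
  have fb8 : ∀ i, i < m → Hi i → s (i + 1) < t (b i + 1) := by
    intro i him hi
    have hbK := fbK i him hi
    have := Nat.findGreatest_is_greatest (P := fun k => t k ≤ s (i + 1))
      (show Nat.findGreatest (fun k => t k ≤ s (i + 1)) K < b i + 1 by show b i < b i + 1; omega)
      (show b i + 1 ≤ K by omega)
    exact lt_of_not_ge this
  -- the refined partition pieces
  set np : ℕ → ℕ := fun i => if Hi i then b i - a i + 2 else 1 with hnp_def
  set w : ℕ → ℕ → ℝ := fun i j => if Hi i then
      (if j = 0 then s i else if j ≤ b i - a i + 1 then t (a i + (j - 1)) else s (i + 1))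
    else (if j = 0 then s i else s (i + 1)) with hw_def
  have hw0 : ∀ i, w i 0 = s i := by
    intro i
    by_cases hi : Hi i <;> simp [hw_def, hi]
  have hwlast : ∀ i, w i (np i) = s (i + 1) := by
    intro i
    by_cases hi : Hi i
    · simp only [hw_def, hnp_def, if_pos hi]
      rw [if_neg (by omega), if_neg (by omega)]
    · simp only [hw_def, hnp_def, if_neg hi]
      rw [if_neg (by omega)]
  have hwmid : ∀ i, Hi i → ∀ j, 1 ≤ j → j ≤ b i - a i + 1 → w i j = t (a i + (j - 1)) := by
    intro i hi j hj1 hj2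
    simp only [hw_def, if_pos hi]
    rw [if_neg (by omega), if_pos hj2]
  have hwstep : ∀ i, i < m → ∀ j, j < np i → w i j ≤ w i (j + 1) := by
    intro i him j hj
    by_cases hi : Hi i
    · have hab' := fab i him hi
      rcases Nat.eq_zero_or_pos j with h0 | h0
      · subst h0
        rw [hw0, hwmid i hi 1 le_rfl (by omega)]
        simpa using fa1 i
      · have hjnp : j < b i - a i + 2 := by simpa [hnp_def, if_pos hi] using hj
        rcases Nat.lt_or_ge j (b i - a i + 1) with h1 | h1
        · rw [hwmid i hi j (by omega) (by omega), hwmid i hi (j+1) (by omega) (by omega)]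
          exact hmono.monotone (by omega)
        · have hj2 : j = b i - a i + 1 := by omega
          subst hj2
          rw [hwmid i hi _ (by omega) le_rfl]
          have : w i (b i - a i + 1 + 1) = s (i + 1) := by
            have := hwlast i
            simpa [hnp_def, if_pos hi] using this
          rw [this]
          have : a i + (b i - a i + 1 - 1) = b i := by omega
          rw [this]
          exact fb1 i him hi
    · have hjnp : j = 0 := by simp [hnp_def, if_neg hi] at hj; omega
      subst hjnp
      rw [hw0]
      have : w i 1 = s (i + 1) := by simp [hw_def, if_neg hi]
      rw [this]
      exact hstep i him
  have hwmono : ∀ i, i < m → ∀ j j', j ≤ j' → j' ≤ np i → w i j ≤ w i j' := by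
    intro i him j j' hjj hj'
    induction j', hjj using Nat.le_induction with
    | base => exact le_rfl
    | succ j' hjj ih => exact le_trans (ih (by omega)) (hwstep i him j' (by omega))
  -- the four budgets
  set tA : ℕ → ℝ := fun i => ∑ j ∈ Finset.range (np i), ‖A (w i j) (w i (j + 1))‖ with htA_def
  set tc : ℕ → ℝ := fun i => if Hi i then
      ‖γ (t (a i)) - γ (s i)‖ ^ (2:ℝ) + ‖γ (s (i+1)) - γ (t (a i))‖ ^ (2:ℝ) +
      (‖γ (t (b i)) - γ (t (a i))‖ ^ (2:ℝ) + ‖γ (s (i+1)) - γ (t (b i))‖ ^ (2:ℝ)) else 0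
    with htc_def
  set ts : ℕ → ℝ := fun i => if Hi i then
      ∑ k ∈ Finset.Ico (a i) (b i), ‖A₁₁ (t k) (t (k + 1))‖ else 0 with hts_def
  set tl : ℕ → ℝ := fun i => if Hi i then ‖A₁₁ (t (a i)) (t (b i))‖ else 0 with htl_def
  have hrp : ∀ u : ℝ, u ^ (2:ℝ) = u * u := by
    intro u
    rw [show (2:ℝ) = ((2:ℕ):ℝ) by norm_num, Real.rpow_natCast]
    ring
  have key : ∀ i, i < m → ‖A (s i) (s (i + 1))‖ ≤ tA i + tc i + ts i + tl i := by
    intro i him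
    by_cases hi : Hi i
    · -- main case
      have hab' := fab i him hi
      have hd : a i + (b i - a i) = b i := by omega
      have h1 := hA (s i) (t (a i)) (s (i + 1)) (fa1 i) (fa5 i him hi)
      have h2 := hA (t (a i)) (t (b i)) (s (i + 1)) (hmono.monotone hab') (fb1 i him hi)
      have h3 := tele (a i) (b i) hab'
      -- expand tA i
      have hnpi : np i = b i - a i + 2 := by simp [hnp_def, hi]
      have hw1 : w i 1 = t (a i) := by
        rw [hwmid i hi 1 le_rfl (by omega)]
        norm_num
      have hwd1 : w i (b i - a i + 1) = t (b i) := by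
        rw [hwmid i hi _ (by omega) le_rfl, show a i + (b i - a i + 1 - 1) = b i by omega]
      have hwd2 : w i (b i - a i + 1 + 1) = s (i + 1) := by
        have := hwlast i
        rw [hnpi] at this
        rwa [show b i - a i + 2 = b i - a i + 1 + 1 by omega] at this
      have htAi : tA i = ‖A (s i) (t (a i))‖ +
          (∑ k ∈ Finset.Ico (a i) (b i), ‖A (t k) (t (k + 1))‖) +
          ‖A (t (b i)) (s (i + 1))‖ := by
        have hmid : ∑ j ∈ Finset.range (b i - a i), ‖A (w i (j + 1)) (w i (j + 1 + 1))‖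
            = ∑ k ∈ Finset.Ico (a i) (b i), ‖A (t k) (t (k + 1))‖ := by
          rw [Finset.sum_Ico_eq_sum_range]
          refine Finset.sum_congr rfl fun j hj => ?_
          have hj' := Finset.mem_range.mp hj
          rw [hwmid i hi (j + 1) (by omega) (by omega),
              hwmid i hi (j + 1 + 1) (by omega) (by omega),
              show a i + (j + 1 - 1) = a i + j by omega,
              show a i + (j + 1 + 1 - 1) = a i + j + 1 by omega]
        simp only [htA_def]
        rw [hnpi, show b i - a i + 2 = b i - a i + 1 + 1 by omega,
          Finset.sum_range_succ, Finset.sum_range_succ']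
        rw [hwd1, hwd2, hw0, hw1, hmid]
        ring
      -- norm estimate
      set X := ‖γ (t (a i)) - γ (s i)‖ with hX
      set Y := ‖γ (s (i + 1)) - γ (t (a i))‖ with hY
      set Z := ‖γ (t (b i)) - γ (t (a i))‖ with hZ
      set Wq := ‖γ (s (i + 1)) - γ (t (b i))‖ with hW
      have hXn : 0 ≤ X := norm_nonneg _
      have hYn : 0 ≤ Y := norm_nonneg _
      have hZn : 0 ≤ Z := norm_nonneg _
      have hWn : 0 ≤ Wq := norm_nonneg _
      have n0 : A (s i) (s (i + 1)) = A (s i) (t (a i)) +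
          (A₁₁ (t (a i)) (t (b i)) +
            ∑ j ∈ Finset.Ico (a i) (b i), (A (t j) (t (j + 1)) - A₁₁ (t j) (t (j + 1))) +
            A (t (b i)) (s (i + 1)) +
            (2⁻¹ : ℝ) • (L (γ (t (b i)) - γ (t (a i))) (γ (s (i+1)) - γ (t (b i))) -
              L (γ (s (i+1)) - γ (t (b i))) (γ (t (b i)) - γ (t (a i))))) +
          (2⁻¹ : ℝ) • (L (γ (t (a i)) - γ (s i)) (γ (s (i+1)) - γ (t (a i))) -
            L (γ (s (i+1)) - γ (t (a i))) (γ (t (a i)) - γ (s i))) := by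
        rw [h1, h2, h3]
      have n1 : ‖A (s i) (s (i + 1))‖ ≤ ‖A (s i) (t (a i))‖ + ‖A₁₁ (t (a i)) (t (b i))‖ +
          (∑ j ∈ Finset.Ico (a i) (b i), (‖A (t j) (t (j + 1))‖ + ‖A₁₁ (t j) (t (j + 1))‖)) +
          ‖A (t (b i)) (s (i + 1))‖ + Z * Wq + X * Y := by
        rw [n0]
        refine le_trans (norm_add_le _ _) ?_
        have e2 := hbr (γ (t (a i)) - γ (s i)) (γ (s (i+1)) - γ (t (a i)))
        have e3 : ‖A₁₁ (t (a i)) (t (b i)) +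
            ∑ j ∈ Finset.Ico (a i) (b i), (A (t j) (t (j + 1)) - A₁₁ (t j) (t (j + 1))) +
            A (t (b i)) (s (i + 1)) +
            (2⁻¹ : ℝ) • (L (γ (t (b i)) - γ (t (a i))) (γ (s (i+1)) - γ (t (b i))) -
              L (γ (s (i+1)) - γ (t (b i))) (γ (t (b i)) - γ (t (a i))))‖ ≤
            ‖A₁₁ (t (a i)) (t (b i))‖ +
            (∑ j ∈ Finset.Ico (a i) (b i), (‖A (t j) (t (j + 1))‖ + ‖A₁₁ (t j) (t (j + 1))‖)) +
            ‖A (t (b i)) (s (i + 1))‖ + Z * Wq := by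
          refine le_trans (norm_add_le _ _) (add_le_add ?_ (hbr _ _))
          refine le_trans (norm_add_le _ _) (add_le_add ?_ le_rfl)
          refine le_trans (norm_add_le _ _) (add_le_add le_rfl ?_)
          refine le_trans (norm_sum_le _ _) (Finset.sum_le_sum fun j _ => norm_sub_le _ _)
        refine le_trans (add_le_add (norm_add_le _ _) e2) ?_
        refine le_trans (add_le_add (add_le_add le_rfl e3) le_rfl) ?_
        linarith
      have htci : tc i = X ^ (2:ℝ) + Y ^ (2:ℝ) + (Z ^ (2:ℝ) + Wq ^ (2:ℝ)) := by
        simp only [htc_def, if_pos hi]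
        rfl
      have htsi : ts i = ∑ k ∈ Finset.Ico (a i) (b i), ‖A₁₁ (t k) (t (k + 1))‖ := by
        simp only [hts_def, if_pos hi]
      have htli : tl i = ‖A₁₁ (t (a i)) (t (b i))‖ := by
        simp only [htl_def, if_pos hi]
      have hsplit : ∑ j ∈ Finset.Ico (a i) (b i), (‖A (t j) (t (j + 1))‖ + ‖A₁₁ (t j) (t (j + 1))‖)
          = (∑ j ∈ Finset.Ico (a i) (b i), ‖A (t j) (t (j + 1))‖) +
            ∑ j ∈ Finset.Ico (a i) (b i), ‖A₁₁ (t j) (t (j + 1))‖ := Finset.sum_add_distrib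
      rw [htci, htsi, htli, htAi, hrp X, hrp Y, hrp Z, hrp Wq]
      rw [hsplit] at n1
      nlinarith [sq_nonneg (X - Y), sq_nonneg (Z - Wq)]
    · -- trivial case
      have hnp1 : np i = 1 := by simp [hnp_def, hi]
      have htAi : tA i = ‖A (s i) (s (i + 1))‖ := by
        simp only [htA_def]
        rw [hnp1, Finset.sum_range_one, hw0]
        have : w i 1 = s (i + 1) := by
          have := hwlast i
          rwa [hnp1] at this
        rw [this]
      have : tc i = 0 ∧ ts i = 0 ∧ tl i = 0 := by
        refine ⟨?_, ?_, ?_⟩ <;> simp [htc_def, hts_def, htl_def, hi]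
      rw [htAi, this.1, this.2.1, this.2.2]
      linarith
  have step1 : ENNReal.ofReal (∑ i ∈ Finset.range m, ‖A (s i) (s (i + 1))‖) ≤
      ENNReal.ofReal (∑ i ∈ Finset.range m, tA i) +
      ENNReal.ofReal (∑ i ∈ Finset.range m, tc i) +
      ENNReal.ofReal (∑ i ∈ Finset.range m, ts i) +
      ENNReal.ofReal (∑ i ∈ Finset.range m, tl i) := by
    have htA_nn : ∀ i, 0 ≤ tA i := fun i => Finset.sum_nonneg fun j _ => norm_nonneg _
    have htc_nn : ∀ i, 0 ≤ tc i := by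
      intro i
      by_cases hi : Hi i
      · simp only [htc_def, if_pos hi]
        have h := fun (x : W) => norm_nonneg x
        exact add_nonneg (add_nonneg (Real.rpow_nonneg (norm_nonneg _) _)
          (Real.rpow_nonneg (norm_nonneg _) _))
          (add_nonneg (Real.rpow_nonneg (norm_nonneg _) _)
            (Real.rpow_nonneg (norm_nonneg _) _))
      · simp only [htc_def, if_neg hi]
        exact le_rfl
    have hts_nn : ∀ i, 0 ≤ ts i := by
      intro i
      by_cases hi : Hi i
      · simp only [hts_def, if_pos hi]
        exact Finset.sum_nonneg fun j _ => norm_nonneg _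
      · simp only [hts_def, if_neg hi]
        exact le_rfl
    have htl_nn : ∀ i, 0 ≤ tl i := by
      intro i
      by_cases hi : Hi i
      · simp only [htl_def, if_pos hi]
        exact norm_nonneg _
      · simp only [htl_def, if_neg hi]
        exact le_rfl
    have h1 : ∑ i ∈ Finset.range m, ‖A (s i) (s (i + 1))‖ ≤
        ∑ i ∈ Finset.range m, tA i + ∑ i ∈ Finset.range m, tc i +
        ∑ i ∈ Finset.range m, ts i + ∑ i ∈ Finset.range m, tl i := by
      rw [← Finset.sum_add_distrib, ← Finset.sum_add_distrib, ← Finset.sum_add_distrib]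
      exact Finset.sum_le_sum fun i hi => key i (Finset.mem_range.mp hi)
    have nA : 0 ≤ ∑ i ∈ Finset.range m, tA i := Finset.sum_nonneg fun i _ => htA_nn i
    have nC : 0 ≤ ∑ i ∈ Finset.range m, tc i := Finset.sum_nonneg fun i _ => htc_nn i
    have nS : 0 ≤ ∑ i ∈ Finset.range m, ts i := Finset.sum_nonneg fun i _ => hts_nn i
    have nL : 0 ≤ ∑ i ∈ Finset.range m, tl i := Finset.sum_nonneg fun i _ => htl_nn i
    refine le_trans (ENNReal.ofReal_le_ofReal h1) ?_
    rw [ENNReal.ofReal_add (by linarith) nL, ENNReal.ofReal_add (by linarith) nS,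
        ENNReal.ofReal_add nA nC]
  have hTA : ENNReal.ofReal (∑ i ∈ Finset.range m, tA i) ≤
      oneVarTP A 0 (t 0) + ∑' k : ℕ, oneVarTP A (t k) (t (k + 1)) := by
    have hnp_le : ∀ i, i < m → np i ≤ K + 2 := by
      intro i him
      by_cases hHi : Hi i
      · have := fbK i him hHi
        simp only [hnp_def, if_pos hHi]
        omega
      · simp only [hnp_def, if_neg hHi]
        omega
    set J : Finset (ℕ ×ₗ ℕ) := ((Finset.range m ×ˢ Finset.range (K + 2)).filter
      (fun e => e.2 < np e.1)).map (toLex : ℕ × ℕ ≃ ℕ ×ₗ ℕ).toEmbedding with hJ_def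
    set P : ℕ ×ₗ ℕ → ℝ := fun x => w (ofLex x).1 (ofLex x).2 with hP_def
    set Q : ℕ ×ₗ ℕ → ℝ := fun x => w (ofLex x).1 ((ofLex x).2 + 1) with hQ_def
    have hJmem : ∀ x ∈ J, (ofLex x).1 < m ∧ (ofLex x).2 < np (ofLex x).1 := by
      intro x hx
      rw [hJ_def, Finset.mem_map] at hx
      obtain ⟨y, hy, hxy⟩ := hx
      subst hxy
      simp only [Finset.mem_filter, Finset.mem_product, Finset.mem_range] at hy
      exact ⟨hy.1.1, hy.2⟩
    -- sum identity
    have hsumJ : ∑ x ∈ J, ‖A (P x) (Q x)‖ = ∑ i ∈ Finset.range m, tA i := by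
      rw [hJ_def, Finset.sum_map]
      have hc1 : ∀ y ∈ (Finset.range m ×ˢ Finset.range (K + 2)).filter
          (fun e => e.2 < np e.1),
          ‖A (P ((toLex : ℕ × ℕ ≃ ℕ ×ₗ ℕ).toEmbedding y))
            (Q ((toLex : ℕ × ℕ ≃ ℕ ×ₗ ℕ).toEmbedding y))‖
          = ‖A (w y.1 y.2) (w y.1 (y.2 + 1))‖ := fun y _ => rfl
      rw [Finset.sum_congr rfl hc1, Finset.sum_filter, Finset.sum_product]
      refine Finset.sum_congr rfl fun i hi => ?_
      have him := Finset.mem_range.mp hi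
      simp only
      rw [← Finset.sum_filter]
      have h2 : (Finset.range (K + 2)).filter (fun j => j < np i) = Finset.range (np i) := by
        ext k
        simp only [Finset.mem_filter, Finset.mem_range]
        have := hnp_le i him
        omega
      rw [h2]
    -- container assignment
    set cont : ℕ ×ₗ ℕ → ℕ := fun x =>
      if Hi (ofLex x).1 then
        (if (ofLex x).2 = 0 then a (ofLex x).1
         else if (ofLex x).2 ≤ b (ofLex x).1 - a (ofLex x).1 then a (ofLex x).1 + (ofLex x).2
         else b (ofLex x).1 + 1)
      else (if s ((ofLex x).1 + 1) ≤ t 0 then 0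
            else Nat.findGreatest (fun k => t k ≤ s (ofLex x).1) K + 1) with hcont_def
    set cLo : ℕ → ℝ := fun c => if c = 0 then (0:ℝ) else t (c - 1) with hcLo_def
    set cHi : ℕ → ℝ := fun c => if c = 0 then t 0 else t c with hcHi_def
    -- facts for the non-Hi case
    have hnoHi : ∀ i, i < m → ¬ Hi i → ¬ (s (i + 1) ≤ t 0) →
        (Nat.findGreatest (fun k => t k ≤ s i) K < K ∧
         t (Nat.findGreatest (fun k => t k ≤ s i) K) ≤ s i ∧
         s (i + 1) ≤ t (Nat.findGreatest (fun k => t k ≤ s i) K + 1)) := by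
      intro i him hHi hst
      have h1 : t 0 < s (i + 1) := lt_of_not_ge hst
      have h2 : t 0 ≤ s i := by
        by_contra h
        exact hHi ⟨0, le_of_lt (lt_of_not_ge h), le_of_lt h1⟩
      have hk0P : t (Nat.findGreatest (fun k => t k ≤ s i) K) ≤ s i :=
        Nat.findGreatest_spec (P := fun k => t k ≤ s i) (Nat.zero_le K) h2
      have hk0K : Nat.findGreatest (fun k => t k ≤ s i) K < K := by
        have h3 : t (Nat.findGreatest (fun k => t k ≤ s i) K) < t K := by
          have := hK K le_rfl
          have := hs_le_n i (by omega)
          linarith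
        exact hmono.lt_iff_lt.mp h3
      have hk0g : s i < t (Nat.findGreatest (fun k => t k ≤ s i) K + 1) := by
        have := Nat.findGreatest_is_greatest (P := fun k => t k ≤ s i)
          (show Nat.findGreatest (fun k => t k ≤ s i) K <
            Nat.findGreatest (fun k => t k ≤ s i) K + 1 by omega)
          (show Nat.findGreatest (fun k => t k ≤ s i) K + 1 ≤ K by omega)
        exact lt_of_not_ge this
      have hk0v : s (i + 1) ≤ t (Nat.findGreatest (fun k => t k ≤ s i) K + 1) := by
        by_contra h
        exact hHi ⟨Nat.findGreatest (fun k => t k ≤ s i) K + 1,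
          le_of_lt hk0g, le_of_lt (lt_of_not_ge h)⟩
      exact ⟨hk0K, hk0P, hk0v⟩
    -- container membership
    have hcont_mem : ∀ x ∈ J, cont x ∈ Finset.range (K + 1) := by
      intro x hx
      obtain ⟨him, hjnp⟩ := hJmem x hx
      rw [Finset.mem_range]
      by_cases hHi : Hi (ofLex x).1
      · have hbK' := fbK _ him hHi
        have hab' := fab _ him hHi
        simp only [hcont_def, if_pos hHi]
        have hjnp' : (ofLex x).2 < b (ofLex x).1 - a (ofLex x).1 + 2 := by
          have : np (ofLex x).1 = b (ofLex x).1 - a (ofLex x).1 + 2 := by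
            simp [hnp_def, hHi]
          omega
        split
        · omega
        · split <;> omega
      · simp only [hcont_def, if_neg hHi]
        split
        · omega
        · have := (hnoHi _ him hHi (by assumption)).1
          omega
    -- container bounds
    have hcontb : ∀ x ∈ J, cLo (cont x) ≤ P x ∧ P x ≤ Q x ∧ Q x ≤ cHi (cont x) := by
      intro x hx
      obtain ⟨him, hjnp⟩ := hJmem x hx
      rcases hxe : ofLex x with ⟨i, j⟩
      rw [hxe] at him hjnp
      simp only at him hjnp
      have hPx : P x = w i j := by simp only [hP_def, hxe]
      have hQx : Q x = w i (j + 1) := by simp only [hQ_def, hxe]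
      have hPQ : P x ≤ Q x := by
        rw [hPx, hQx]
        exact hwstep i him j hjnp
      refine ⟨?_, hPQ, ?_⟩ <;> [skip; skip] <;> by_cases hHi : Hi i
      case pos =>
        -- lower bound, Hi case
        have hbK' := fbK i him hHi
        have hab' := fab i him hHi
        have hnpi : np i = b i - a i + 2 := by simp [hnp_def, hHi]
        rcases Nat.eq_zero_or_pos j with hj0 | hj0
        · subst hj0
          have hcv : cont x = a i := by
            simp [hcont_def, hxe, hHi]
          rw [hcv, hPx, hw0]
          rcases Nat.eq_zero_or_pos (a i) with ha0 | ha0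
          · rw [ha0]
            simp only [hcLo_def, if_pos rfl]
            exact hs_nonneg i (by omega)
          · simp only [hcLo_def, if_neg (by omega : ¬ a i = 0)]
            exact le_of_lt (fa7 i (by omega))
        · rcases Nat.lt_or_ge (b i - a i) j with hjb | hjb
          · have hcv : cont x = b i + 1 := by
              simp only [hcont_def, hxe, if_neg (by omega : ¬ j = 0),
                if_neg (by omega : ¬ j ≤ b i - a i), if_pos hHi]
            have hPv : P x = t (b i) := by
              rw [hPx, hwmid i hHi j (by omega) (by omega : j ≤ b i - a i + 1),
                show a i + (j - 1) = b i by omega]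
            rw [hcv, hPv]
            simp only [hcLo_def, if_neg (by omega : ¬ b i + 1 = 0)]
            norm_num
          · have hcv : cont x = a i + j := by
              simp only [hcont_def, hxe, if_neg (by omega : ¬ j = 0), if_pos hjb,
                if_pos hHi]
            have hPv : P x = t (a i + j - 1) := by
              rw [hPx, hwmid i hHi j (by omega) (by omega),
                show a i + (j - 1) = a i + j - 1 by omega]
            rw [hcv, hPv]
            simp only [hcLo_def, if_neg (by omega : ¬ a i + j = 0)]
            exact le_rfl
      case neg =>
        -- lower bound, ¬ Hi case
        have hnpi : np i = 1 := by simp [hnp_def, hHi]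
        have hj0 : j = 0 := by omega
        subst hj0
        rw [hPx, hw0]
        by_cases hst : s (i + 1) ≤ t 0
        · have hcv : cont x = 0 := by
            simp only [hcont_def, hxe, if_neg hHi, if_pos hst]
          rw [hcv]
          simp only [hcLo_def, if_pos rfl]
          exact hs_nonneg i (by omega)
        · have hcv : cont x = Nat.findGreatest (fun k => t k ≤ s i) K + 1 := by
            simp only [hcont_def, hxe, if_neg hHi, if_neg hst]
          rw [hcv]
          simp only [hcLo_def,
            if_neg (by omega : ¬ Nat.findGreatest (fun k => t k ≤ s i) K + 1 = 0)]
          have := (hnoHi i him hHi hst).2.1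
          simpa using this
      case pos =>
        -- upper bound, Hi case
        have hbK' := fbK i him hHi
        have hab' := fab i him hHi
        have hnpi : np i = b i - a i + 2 := by simp [hnp_def, hHi]
        rcases Nat.eq_zero_or_pos j with hj0 | hj0
        · subst hj0
          have hcv : cont x = a i := by
            simp [hcont_def, hxe, hHi]
          have hQv : Q x = t (a i) := by
            rw [hQx, hwmid i hHi 1 le_rfl (by omega)]
            norm_num
          rw [hcv, hQv]
          rcases Nat.eq_zero_or_pos (a i) with ha0 | ha0
          · rw [ha0]
            simp only [hcHi_def, if_pos rfl]
            exact le_rfl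
          · simp only [hcHi_def, if_neg (by omega : ¬ a i = 0)]
            exact le_rfl
        · rcases Nat.lt_or_ge (b i - a i) j with hjb | hjb
          · have hcv : cont x = b i + 1 := by
              simp only [hcont_def, hxe, if_neg (by omega : ¬ j = 0),
                if_neg (by omega : ¬ j ≤ b i - a i), if_pos hHi]
            have hj1 : j = b i - a i + 1 := by omega
            have hQv : Q x = s (i + 1) := by
              rw [hQx, hj1, show b i - a i + 1 + 1 = np i by omega, hwlast]
            rw [hcv, hQv]
            simp only [hcHi_def, if_neg (by omega : ¬ b i + 1 = 0)]
            exact le_of_lt (fb8 i him hHi)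
          · have hcv : cont x = a i + j := by
              simp only [hcont_def, hxe, if_neg (by omega : ¬ j = 0), if_pos hjb,
                if_pos hHi]
            have hQv : Q x = t (a i + j) := by
              rw [hQx, hwmid i hHi (j + 1) (by omega) (by omega),
                show a i + (j + 1 - 1) = a i + j by omega]
            rw [hcv, hQv]
            simp only [hcHi_def, if_neg (by omega : ¬ a i + j = 0)]
            exact le_rfl
      case neg =>
        -- upper bound, ¬ Hi case
        have hnpi : np i = 1 := by simp [hnp_def, hHi]
        have hj0 : j = 0 := by omega
        subst hj0
        have hQv : Q x = s (i + 1) := by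
          rw [hQx, show (0:ℕ) + 1 = np i by omega, hwlast]
        rw [hQv]
        by_cases hst : s (i + 1) ≤ t 0
        · have hcv : cont x = 0 := by
            simp only [hcont_def, hxe, if_neg hHi, if_pos hst]
          rw [hcv]
          simp only [hcHi_def, if_pos rfl]
          exact hst
        · have hcv : cont x = Nat.findGreatest (fun k => t k ≤ s i) K + 1 := by
            simp only [hcont_def, hxe, if_neg hHi, if_neg hst]
          rw [hcv]
          simp only [hcHi_def,
            if_neg (by omega : ¬ Nat.findGreatest (fun k => t k ≤ s i) K + 1 = 0)]
          exact (hnoHi i him hHi hst).2.2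
    -- chain
    have hJchain : ∀ x ∈ J, ∀ x' ∈ J, x < x' → Q x ≤ P x' := by
      intro x hx x' hx' hlt'
      obtain ⟨him, hjnp⟩ := hJmem x hx
      obtain ⟨him', hjnp'⟩ := hJmem x' hx'
      rcases Prod.Lex.lt_iff.mp hlt' with h | ⟨he, hj⟩
      · have h1 : Q x ≤ w (ofLex x).1 (np (ofLex x).1) :=
          hwmono _ him _ _ (by omega) le_rfl
        have h2 : w (ofLex x').1 0 ≤ P x' := hwmono _ him' 0 _ (by omega) (by omega)
        rw [hwlast] at h1
        rw [hw0] at h2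
        have h3 : s ((ofLex x).1 + 1) ≤ s (ofLex x').1 := hsmono _ _ (by omega) (by omega)
        calc Q x ≤ s ((ofLex x).1 + 1) := h1
          _ ≤ s (ofLex x').1 := h3
          _ ≤ P x' := h2
      · have h1 : Q x = w (ofLex x').1 ((ofLex x).2 + 1) := by rw [hQ_def]; simp only; rw [he]
        rw [h1]
        exact hwmono _ him' _ _ (by omega) (by omega)
    -- fiberwise decomposition and packing
    have hfib := Finset.sum_fiberwise_of_maps_to hcont_mem (fun x => ‖A (P x) (Q x)‖)
    have hlohi : ∀ c, cLo c ≤ cHi c := by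
      intro c
      rcases Nat.eq_zero_or_pos c with h0 | h0
      · rw [h0]
        simp only [hcLo_def, hcHi_def, if_pos rfl]
        exact le_of_lt ht0
      · simp only [hcLo_def, hcHi_def, if_neg (by omega : ¬ c = 0)]
        exact hmono.monotone (by omega)
    have hpackc : ∀ c, ENNReal.ofReal (∑ x ∈ J.filter (fun x => cont x = c),
        ‖A (P x) (Q x)‖) ≤ oneVarTP A (cLo c) (cHi c) := by
      intro c
      refine pack_le (fun x y => ‖A x y‖) (fun x y => norm_nonneg _) P Q (hlohi c) _ ?_ ?_
      · intro x hx
        have hx' := Finset.mem_filter.mp hx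
        have := hcontb x hx'.1
        rw [hx'.2] at this
        exact this
      · intro x hx x' hx' h
        exact hJchain x (Finset.mem_filter.mp hx).1 x' (Finset.mem_filter.mp hx').1 h
    have hofr : ENNReal.ofReal (∑ i ∈ Finset.range m, tA i) ≤
        ∑ c ∈ Finset.range (K + 1), oneVarTP A (cLo c) (cHi c) := by
      rw [← hsumJ, ← hfib]
      rw [ENNReal.ofReal_sum_of_nonneg
        (fun c _ => Finset.sum_nonneg fun x _ => norm_nonneg _)]
      exact Finset.sum_le_sum fun c _ => hpackc c
    refine le_trans hofr ?_
    rw [Finset.sum_range_succ' (fun c => oneVarTP A (cLo c) (cHi c)) K]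
    have he0 : oneVarTP (W := W) A (cLo 0) (cHi 0) = oneVarTP A 0 (t 0) := by
      simp only [hcLo_def, hcHi_def, if_pos rfl]
    have hek : ∀ k, oneVarTP (W := W) A (cLo (k + 1)) (cHi (k + 1)) =
        oneVarTP A (t k) (t (k + 1)) := by
      intro k
      simp only [hcLo_def, hcHi_def, if_neg (by omega : ¬ k + 1 = 0)]
      norm_num
    rw [he0, Finset.sum_congr rfl (fun k _ => hek k), add_comm]
    exact add_le_add le_rfl (ENNReal.sum_le_tsum (Finset.range K))
  have hTC : ENNReal.ofReal (∑ i ∈ Finset.range m, tc i) ≤ 2 * pVarPowInf 2 γ := by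
    have hg2 : ∀ x y : ℝ, 0 ≤ (fun x y : ℝ => ‖γ y - γ x‖ ^ (2:ℝ)) x y :=
      fun x y => Real.rpow_nonneg (norm_nonneg _) _
    have hn0 : (0:ℝ) ≤ (n:ℝ) := Nat.cast_nonneg n
    set J : Finset (ℕ ×ₗ ℕ) := ((Finset.range m ×ˢ Finset.range 2).filter
      (fun e => Hi e.1)).map (toLex : ℕ × ℕ ≃ ℕ ×ₗ ℕ).toEmbedding with hJ_def
    have hJmem : ∀ x ∈ J, (ofLex x).1 < m ∧ (ofLex x).2 < 2 ∧ Hi (ofLex x).1 := by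
      intro x hx
      rw [hJ_def, Finset.mem_map] at hx
      obtain ⟨y, hy, hxy⟩ := hx
      subst hxy
      simp only [Finset.mem_filter, Finset.mem_product, Finset.mem_range] at hy
      exact ⟨hy.1.1, hy.1.2, hy.2⟩
    have hfam : ∀ (p q : ℕ ×ₗ ℕ → ℝ),
        (∀ x ∈ J, 0 ≤ p x ∧ p x ≤ q x ∧ q x ≤ (n:ℝ)) →
        (∀ x ∈ J, ∀ x' ∈ J, x < x' → q x ≤ p x') →
        ENNReal.ofReal (∑ x ∈ J, ‖γ (q x) - γ (p x)‖ ^ (2:ℝ)) ≤ pVarPowInf 2 γ := by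
      intro p q hbd hch
      have h := pack_le (fun x y : ℝ => ‖γ y - γ x‖ ^ (2:ℝ)) hg2 p q hn0 J hbd hch
      refine le_trans h ?_
      rw [pVarPowInf]
      exact le_iSup_of_le n (le_of_eq rfl)
    set p1 : ℕ ×ₗ ℕ → ℝ := fun e => if (ofLex e).2 = 0 then s (ofLex e).1
      else t (a (ofLex e).1) with hp1_def
    set q1 : ℕ ×ₗ ℕ → ℝ := fun e => if (ofLex e).2 = 0 then t (a (ofLex e).1)
      else s ((ofLex e).1 + 1) with hq1_def
    set p2 : ℕ ×ₗ ℕ → ℝ := fun e => if (ofLex e).2 = 0 then t (a (ofLex e).1)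
      else t (b (ofLex e).1) with hp2_def
    set q2 : ℕ ×ₗ ℕ → ℝ := fun e => if (ofLex e).2 = 0 then t (b (ofLex e).1)
      else s ((ofLex e).1 + 1) with hq2_def
    have hlt : ∀ x x' : ℕ ×ₗ ℕ, x < x' →
        (ofLex x).1 < (ofLex x').1 ∨ (ofLex x).1 = (ofLex x').1 ∧ (ofLex x).2 < (ofLex x').2 :=
      fun x x' h => Prod.Lex.lt_iff.mp h
    -- bounds for family 1
    have hbd1 : ∀ x ∈ J, 0 ≤ p1 x ∧ p1 x ≤ q1 x ∧ q1 x ≤ (n:ℝ) := by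
      intro x hx
      obtain ⟨him, hj2, hHi⟩ := hJmem x hx
      have hsn : 0 ≤ s (ofLex x).1 := hs_nonneg _ (by omega)
      have h5 := fa5 _ him hHi
      have h1 := fa1 (ofLex x).1
      have hn' := hs_le_n ((ofLex x).1 + 1) (by omega)
      rcases Nat.eq_zero_or_pos (ofLex x).2 with h0 | h0
      · simp only [hp1_def, hq1_def, if_pos h0]
        exact ⟨hsn, h1, by linarith⟩
      · simp only [hp1_def, hq1_def, if_neg (by omega : ¬ (ofLex x).2 = 0)]
        exact ⟨by linarith, h5, hn'⟩
    have hch1 : ∀ x ∈ J, ∀ x' ∈ J, x < x' → q1 x ≤ p1 x' := by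
      intro x hx x' hx' hlt'
      obtain ⟨him, hj2, hHi⟩ := hJmem x hx
      obtain ⟨him', hj2', hHi'⟩ := hJmem x' hx'
      have h5 := fa5 _ him hHi
      have h1' := fa1 (ofLex x').1
      rcases hlt x x' hlt' with h | ⟨he, hj⟩
      · have hss : s ((ofLex x).1 + 1) ≤ s (ofLex x').1 := hsmono _ _ (by omega) (by omega)
        have hq : q1 x ≤ s ((ofLex x).1 + 1) := by
          rcases Nat.eq_zero_or_pos (ofLex x).2 with h0 | h0
          · simp only [hq1_def, if_pos h0]; exact h5
          · simp only [hq1_def, if_neg (by omega : ¬ (ofLex x).2 = 0)]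
            exact le_rfl
        have hp : s (ofLex x').1 ≤ p1 x' := by
          rcases Nat.eq_zero_or_pos (ofLex x').2 with h0 | h0
          · simp only [hp1_def, if_pos h0]
            exact le_rfl
          · simp only [hp1_def, if_neg (by omega : ¬ (ofLex x').2 = 0)]; exact h1'
        linarith
      · have h0 : (ofLex x).2 = 0 := by omega
        have h1 : ¬ (ofLex x').2 = 0 := by omega
        simp only [hq1_def, if_pos h0, hp1_def, if_neg h1, he]
        exact le_rfl
    -- bounds for family 2
    have hbd2 : ∀ x ∈ J, 0 ≤ p2 x ∧ p2 x ≤ q2 x ∧ q2 x ≤ (n:ℝ) := by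
      intro x hx
      obtain ⟨him, hj2, hHi⟩ := hJmem x hx
      have hsn : 0 ≤ s (ofLex x).1 := hs_nonneg _ (by omega)
      have h1 := fa1 (ofLex x).1
      have hb1 := fb1 _ him hHi
      have hab' := fab _ him hHi
      have htab : t (a (ofLex x).1) ≤ t (b (ofLex x).1) := hmono.monotone hab'
      have hn' := hs_le_n ((ofLex x).1 + 1) (by omega)
      rcases Nat.eq_zero_or_pos (ofLex x).2 with h0 | h0
      · simp only [hp2_def, hq2_def, if_pos h0]
        exact ⟨by linarith, htab, by linarith⟩
      · simp only [hp2_def, hq2_def, if_neg (by omega : ¬ (ofLex x).2 = 0)]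
        exact ⟨by linarith, hb1, hn'⟩
    have hch2 : ∀ x ∈ J, ∀ x' ∈ J, x < x' → q2 x ≤ p2 x' := by
      intro x hx x' hx' hlt'
      obtain ⟨him, hj2, hHi⟩ := hJmem x hx
      obtain ⟨him', hj2', hHi'⟩ := hJmem x' hx'
      have hb1 := fb1 _ him hHi
      have hsn' := fa1 (ofLex x').1
      have hb6' := fb6 _ him' hHi'
      rcases hlt x x' hlt' with h | ⟨he, hj⟩
      · have hss : s ((ofLex x).1 + 1) ≤ s (ofLex x').1 := hsmono _ _ (by omega) (by omega)
        have hq : q2 x ≤ s ((ofLex x).1 + 1) := by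
          rcases Nat.eq_zero_or_pos (ofLex x).2 with h0 | h0
          · simp only [hq2_def, if_pos h0]; exact hb1
          · simp only [hq2_def, if_neg (by omega : ¬ (ofLex x).2 = 0)]
            exact le_rfl
        have hp : s (ofLex x').1 ≤ p2 x' := by
          rcases Nat.eq_zero_or_pos (ofLex x').2 with h0 | h0
          · simp only [hp2_def, if_pos h0]; exact hsn'
          · simp only [hp2_def, if_neg (by omega : ¬ (ofLex x').2 = 0)]
            exact le_trans hsn' (hmono.monotone (fab _ him' hHi'))
        linarith
      · have h0 : (ofLex x).2 = 0 := by omega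
        have h1 : ¬ (ofLex x').2 = 0 := by omega
        simp only [hq2_def, if_pos h0, hp2_def, if_neg h1, he]
        exact le_rfl
    -- sum identities
    set f1 : ℕ → ℝ := fun i => if Hi i then ‖γ (t (a i)) - γ (s i)‖ ^ (2:ℝ) +
        ‖γ (s (i+1)) - γ (t (a i))‖ ^ (2:ℝ) else 0 with hf1_def
    set f2 : ℕ → ℝ := fun i => if Hi i then ‖γ (t (b i)) - γ (t (a i))‖ ^ (2:ℝ) +
        ‖γ (s (i+1)) - γ (t (b i))‖ ^ (2:ℝ) else 0 with hf2_def
    have hsum1 : ∑ x ∈ J, ‖γ (q1 x) - γ (p1 x)‖ ^ (2:ℝ) = ∑ i ∈ Finset.range m, f1 i := by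
      rw [hJ_def, Finset.sum_map, Finset.sum_filter, Finset.sum_product]
      refine Finset.sum_congr rfl fun i hi => ?_
      rw [Finset.sum_range_succ, Finset.sum_range_one]
      by_cases hHi : Hi i
      · simp only [hf1_def, if_pos hHi, hp1_def, hq1_def]
        norm_num
      · simp [hf1_def, hHi]
    have hsum2 : ∑ x ∈ J, ‖γ (q2 x) - γ (p2 x)‖ ^ (2:ℝ) = ∑ i ∈ Finset.range m, f2 i := by
      rw [hJ_def, Finset.sum_map, Finset.sum_filter, Finset.sum_product]
      refine Finset.sum_congr rfl fun i hi => ?_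
      rw [Finset.sum_range_succ, Finset.sum_range_one]
      by_cases hHi : Hi i
      · simp only [hf2_def, if_pos hHi, hp2_def, hq2_def]
        norm_num
      · simp [hf2_def, hHi]
    have hF1 := hfam p1 q1 hbd1 hch1
    have hF2 := hfam p2 q2 hbd2 hch2
    rw [hsum1] at hF1
    rw [hsum2] at hF2
    have htc_split : ∑ i ∈ Finset.range m, tc i =
        ∑ i ∈ Finset.range m, f1 i + ∑ i ∈ Finset.range m, f2 i := by
      rw [← Finset.sum_add_distrib]
      refine Finset.sum_congr rfl fun i hi => ?_
      by_cases hHi : Hi i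
      · simp only [htc_def, hf1_def, hf2_def, if_pos hHi]
      · simp [htc_def, hf1_def, hf2_def, hHi]
    have hf1_nn : 0 ≤ ∑ i ∈ Finset.range m, f1 i := by
      refine Finset.sum_nonneg fun i _ => ?_
      by_cases hHi : Hi i
      · simp only [hf1_def, if_pos hHi]
        exact add_nonneg (Real.rpow_nonneg (norm_nonneg _) _) (Real.rpow_nonneg (norm_nonneg _) _)
      · simp [hf1_def, hHi]
    have hf2_nn : 0 ≤ ∑ i ∈ Finset.range m, f2 i := by
      refine Finset.sum_nonneg fun i _ => ?_
      by_cases hHi : Hi i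
      · simp only [hf2_def, if_pos hHi]
        exact add_nonneg (Real.rpow_nonneg (norm_nonneg _) _) (Real.rpow_nonneg (norm_nonneg _) _)
      · simp [hf2_def, hHi]
    rw [htc_split, ENNReal.ofReal_add hf1_nn hf2_nn, two_mul]
    exact add_le_add hF1 hF2
  have habchain : ∀ i i', i < i' → i' < m → Hi i → Hi i' → b i ≤ a i' := by
    intro i i' hii hi'm hi hi'
    have h1 : t (b i) ≤ s (i + 1) := fb1 i (by omega) hi
    have h2 : s (i + 1) ≤ s i' := hsmono (i + 1) i' (by omega) (by omega)
    have h3 : s i' ≤ t (a i') := fa1 i'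
    exact hmono.le_iff_le.mp (by linarith)
  have hTS : ENNReal.ofReal (∑ i ∈ Finset.range m, ts i) ≤
      ⨆ (m' : ℕ) (σ : ℕ → ℕ) (_ : StrictMono σ),
        ENNReal.ofReal (∑ k ∈ Finset.range m', ‖A₁₁ (t (σ k)) (t (σ (k + 1)))‖) := by
    have h1 : ∑ i ∈ Finset.range m, ts i =
        ∑ i ∈ (Finset.range m).filter Hi,
          ∑ k ∈ Finset.Ico (a i) (b i), ‖A₁₁ (t k) (t (k + 1))‖ := by
      simp only [hts_def]
      exact (Finset.sum_filter _ _).symm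
    have hdisj : (↑((Finset.range m).filter Hi) : Set ℕ).PairwiseDisjoint
        (fun i => Finset.Ico (a i) (b i)) := by
      intro i hi' j hj' hne
      simp only [Finset.coe_filter, Set.mem_setOf_eq, Finset.mem_range] at hi' hj'
      rcases lt_or_gt_of_ne hne with h | h
      · have hba := habchain i j h hj'.1 hi'.2 hj'.2
        refine Finset.disjoint_left.mpr fun k hk hk' => ?_
        simp only [Finset.mem_Ico] at hk hk'
        omega
      · have hba := habchain j i h hi'.1 hj'.2 hi'.2
        refine Finset.disjoint_left.mpr fun k hk hk' => ?_
        simp only [Finset.mem_Ico] at hk hk'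
        omega
    have h2 := Finset.sum_biUnion (f := fun k => ‖A₁₁ (t k) (t (k + 1))‖) hdisj
    have hsub : ((Finset.range m).filter Hi).biUnion (fun i => Finset.Ico (a i) (b i)) ⊆
        Finset.range K := by
      intro k hk
      simp only [Finset.mem_biUnion, Finset.mem_filter, Finset.mem_range, Finset.mem_Ico] at hk ⊢
      obtain ⟨i, ⟨him, hi⟩, hk1, hk2⟩ := hk
      have := fbK i him hi
      omega
    have h3 : ∑ k ∈ ((Finset.range m).filter Hi).biUnion (fun i => Finset.Ico (a i) (b i)),
        ‖A₁₁ (t k) (t (k + 1))‖ ≤ ∑ k ∈ Finset.range K, ‖A₁₁ (t k) (t (k + 1))‖ :=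
      Finset.sum_le_sum_of_subset_of_nonneg hsub fun _ _ _ => norm_nonneg _
    have h4 : ∑ i ∈ Finset.range m, ts i ≤ ∑ k ∈ Finset.range K, ‖A₁₁ (t k) (t (k + 1))‖ := by
      rw [h1, ← h2]
      exact h3
    refine le_trans (ENNReal.ofReal_le_ofReal h4) ?_
    exact le_iSup_of_le K (le_iSup_of_le id (le_iSup_of_le strictMono_id (le_of_eq rfl)))
  have hTL : ENNReal.ofReal (∑ i ∈ Finset.range m, tl i) ≤
      ⨆ (m' : ℕ) (σ : ℕ → ℕ) (_ : StrictMono σ),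
        ENNReal.ofReal (∑ k ∈ Finset.range m', ‖A₁₁ (t (σ k)) (t (σ (k + 1)))‖) := by
    set S : Finset ℕ := (Finset.range m).filter (fun i => Hi i ∧ a i < b i) with hS_def
    have hsub : S ⊆ Finset.range m := Finset.filter_subset _ _
    have hSmem : ∀ i ∈ S, i < m ∧ Hi i ∧ a i < b i := by
      intro i hi
      have := Finset.mem_filter.mp hi
      exact ⟨Finset.mem_range.mp this.1, this.2⟩
    have h0 : ∀ i ∈ Finset.range m, i ∉ S → tl i = 0 := by
      intro i hi hni
      have him := Finset.mem_range.mp hi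
      by_cases hHi : Hi i
      · have hab2 : ¬ a i < b i := by
          intro hlt
          exact hni (Finset.mem_filter.mpr ⟨hi, hHi, hlt⟩)
        have hab3 : a i = b i := le_antisymm (fab i him hHi) (by omega)
        simp only [htl_def, if_pos hHi, hab3, hA₁₁0, norm_zero]
      · simp [htl_def, hHi]
    have h1 : ∑ i ∈ Finset.range m, tl i = ∑ i ∈ S, ‖A₁₁ (t (a i)) (t (b i))‖ := by
      rw [← Finset.sum_subset hsub h0]
      refine Finset.sum_congr rfl fun i hi => ?_
      simp only [htl_def, if_pos (hSmem i hi).2.1]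
    set N := S.card with hN_def
    set e : ℕ → ℕ := fun j => if h : j < N then (S.orderEmbOfFin rfl ⟨j, h⟩ : ℕ) else 0
      with he_def
    have hemem : ∀ j, j < N → e j ∈ S := by
      intro j hj
      simp only [he_def, dif_pos hj]
      exact Finset.orderEmbOfFin_mem S rfl _
    have hemono : ∀ j j', j < j' → j' < N → e j < e j' := by
      intro j j' hjj hj'
      simp only [he_def, dif_pos hj', dif_pos (show j < N by omega)]
      exact (S.orderEmbOfFin rfl).strictMono (show (⟨j, by omega⟩ : Fin N) < ⟨j', hj'⟩ from hjj)
    have h2 : ∑ i ∈ S, ‖A₁₁ (t (a i)) (t (b i))‖ =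
        ∑ j ∈ Finset.range N, ‖A₁₁ (t (a (e j))) (t (b (e j)))‖ := by
      refine (Finset.sum_bij (fun j (hj : j ∈ Finset.range N) => e j) ?_ ?_ ?_ ?_).symm
      · intro j hj
        exact hemem j (Finset.mem_range.mp hj)
      · intro j1 hj1 j2 hj2 heq
        by_contra hne
        rcases lt_or_gt_of_ne hne with h | h
        · exact absurd heq (Nat.ne_of_lt (hemono j1 j2 h (Finset.mem_range.mp hj2)))
        · exact absurd heq.symm (Nat.ne_of_lt (hemono j2 j1 h (Finset.mem_range.mp hj1)))
      · intro i hi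
        have : i ∈ Set.range (S.orderEmbOfFin rfl) := by
          rw [Finset.range_orderEmbOfFin]
          exact hi
        obtain ⟨jf, hjf⟩ := this
        refine ⟨jf.1, Finset.mem_range.mpr jf.2, ?_⟩
        simp only [he_def, dif_pos jf.2]
        rw [← hjf]
        exact dif_pos jf.2
      · intro j hj
        rfl
    refine le_trans (ENNReal.ofReal_le_ofReal (le_of_eq (h1.trans h2))) ?_
    refine packSigma_le (fun k l => ‖A₁₁ (t k) (t l)‖) (fun _ _ => norm_nonneg _) N
      (fun j => a (e j)) (fun j => b (e j)) ?_ ?_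
    · intro j hj
      exact (hSmem _ (hemem j hj)).2.2
    · intro j hj
      have hm1 := hSmem _ (hemem j (by omega))
      have hm2 := hSmem _ (hemem (j + 1) hj)
      exact habchain _ _ (hemono j (j + 1) (by omega) hj) hm2.1 hm1.2.1 hm2.2.1
  -- assemble
  refine le_trans step1 ?_
  refine le_trans (add_le_add (add_le_add (add_le_add hTA hTC) hTS) hTL) ?_
  set T1 := oneVarTP A 0 (t 0)
  set S := ∑' k : ℕ, oneVarTP A (t k) (t (k + 1))
  set P2 := 2 * pVarPowInf 2 γ
  set U := ⨆ (m' : ℕ) (σ : ℕ → ℕ) (_ : StrictMono σ),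
      ENNReal.ofReal (∑ k ∈ Finset.range m', ‖A₁₁ (t (σ k)) (t (σ (k + 1)))‖)
  have hre : T1 + S + P2 + U + U = T1 + P2 + S + 2 * U := by ring
  rw [hre]
  have hS : S ≤ 2 * S := le_mul_of_one_le_left zero_le one_le_two
  gcongr

end
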